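/- Let A, B, X be n×n complex matrices such that the 2n×2n block matrix M = [[A, X],[X*, B]] is accretive. Then for each j = 1,...,n, 2·s_j(X) ≤ s_j(M), where s_j denotes the j-th largest singular value. -/

import Mathlib

open MeasureTheory Matrix
open scoped ComplexOrder

/-- The "real part" (Hermitian part) of a complex matrix: `(A + Aᴴ)/2`. -/
noncomputable def mre {m : Type*} (A : Matrix m m ℂ) : Matrix m m ℂ :=
  (1/2 : ℂ) • (A + Aᴴ)

/-- A matrix is accretive if its Hermitian part is positive semidefinite. -/
def Accretive {m : Type*} [Fintype m] (A : Matrix m m ℂ) : Prop :=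
  (mre A).PosSemidef

/-- Principal fractional power `A ^ t` of a matrix whose spectrum avoids `(-∞, 0]`,
given (for `0 < t < 1`) by the standard integral formula
`A^t = (sin (tπ)/π) ∫₀^∞ s^(t-1) A (A + s I)⁻¹ ds`. -/
noncomputable def apow {m : Type*} [Fintype m] [DecidableEq m]
    (A : Matrix m m ℂ) (t : ℝ) : Matrix m m ℂ :=
  if t = 0 then 1 else if t = 1 then A else
    Matrix.of fun i j => ∫ s in Set.Ioi (0 : ℝ),
      (((Real.sin (t * Real.pi) / Real.pi) * s ^ (t - 1)) •
        (A * (A + (s : ℂ) • (1 : Matrix m m ℂ))⁻¹)) i j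

/-- The weighted geometric mean `A ♯ₜ B = A^(1/2) (A^(-1/2) B A^(-1/2))^t A^(1/2)`
of (strictly accretive) matrices. -/
noncomputable def gmean {m : Type*} [Fintype m] [DecidableEq m]
    (A : Matrix m m ℂ) (t : ℝ) (B : Matrix m m ℂ) : Matrix m m ℂ :=
  apow A (1/2) * apow ((apow A (1/2))⁻¹ * B * (apow A (1/2))⁻¹) t * apow A (1/2)

/-- The absolute value `|X| = (Xᴴ X)^(1/2)` of a matrix. -/
noncomputable def absM {m : Type*} [Fintype m] [DecidableEq m]
    (X : Matrix m m ℂ) : Matrix m m ℂ :=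
  (Matrix.posSemidef_conjTranspose_mul_self X).1.eigenvectorUnitary.1 *
    diagonal ((↑) ∘ (√·) ∘ (Matrix.posSemidef_conjTranspose_mul_self X).1.eigenvalues) *
    (star (Matrix.posSemidef_conjTranspose_mul_self X).1.eigenvectorUnitary : Matrix m m ℂ)

/-- The `j`-th largest singular value of a complex matrix. -/
noncomputable def singVals {k : ℕ} (T : Matrix (Fin k) (Fin k) ℂ) (j : Fin k) : ℝ :=
  Real.sqrt (((Matrix.posSemidef_conjTranspose_mul_self T).1.eigenvalues ∘
    Tuple.sort (Matrix.posSemidef_conjTranspose_mul_self T).1.eigenvalues) j.rev)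

/-- The `j`-th largest eigenvalue of a Hermitian matrix (junk value `0` otherwise). -/
noncomputable def eigDesc {k : ℕ} (T : Matrix (Fin k) (Fin k) ℂ) (j : Fin k) : ℝ :=
  if h : T.IsHermitian then (h.eigenvalues ∘ Tuple.sort h.eigenvalues) j.rev else 0

/-- The numerical range of `A` lies in the sector
`S_α = {z : Re z ≥ 0, |Im z| ≤ tan α · Re z}`. -/
def InSector {k : ℕ} (α : ℝ) (A : Matrix (Fin k) (Fin k) ℂ) : Prop :=
  ∀ x : EuclideanSpace ℂ (Fin k), ‖x‖ = 1 →
    0 ≤ (star (x : Fin k → ℂ) ⬝ᵥ A.mulVec (x : Fin k → ℂ)).re ∧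
      |(star (x : Fin k → ℂ) ⬝ᵥ A.mulVec (x : Fin k → ℂ)).im| ≤
        Real.tan α * (star (x : Fin k → ℂ) ⬝ᵥ A.mulVec (x : Fin k → ℂ)).re

namespace Stmt6Aux

open Module Submodule

/-! ### Generic helpers -/

noncomputable def eu {N : ℕ} (v : Fin N → ℂ) : EuclideanSpace ℂ (Fin N) :=
  (WithLp.equiv 2 (Fin N → ℂ)).symm v

@[simp] lemma eu_apply {N : ℕ} (v : Fin N → ℂ) (i : Fin N) : eu v i = v i := rfl

lemma eu_coe {N : ℕ} (x : EuclideanSpace ℂ (Fin N)) : eu (x : Fin N → ℂ) = x := rfl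

lemma form_span {N : ℕ} {H : Matrix (Fin N) (Fin N) ℂ} {ι : Type*} [Fintype ι]
    {w : ι → EuclideanSpace ℂ (Fin N)} (hw : Orthonormal ℂ w)
    {μ : ι → ℝ} (hweig : ∀ k, H.mulVec (w k) = (μ k : ℂ) • (w k))
    {x : EuclideanSpace ℂ (Fin N)} (hx : x ∈ Submodule.span ℂ (Set.range w)) :
    ∃ r : ι → ℝ, (∀ k, 0 ≤ r k) ∧
      (star (x : Fin N → ℂ) ⬝ᵥ H.mulVec x).re = ∑ k, μ k * r k ∧
      ‖x‖ ^ 2 = ∑ k, r k := by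
  obtain ⟨c, rfl⟩ := mem_span_range_iff_exists_fun ℂ |>.mp hx
  refine ⟨fun k => Complex.normSq (c k), fun k => Complex.normSq_nonneg _, ?_, ?_⟩
  · have hmv : H.mulVec (∑ k, c k • w k : EuclideanSpace ℂ (Fin N))
        = ∑ k, (c k * (μ k : ℂ)) • (w k : EuclideanSpace ℂ (Fin N)) := by
      rw [show H.mulVec (∑ k, c k • w k : EuclideanSpace ℂ (Fin N))
          = H.mulVecLin (∑ k, c k • (w k : EuclideanSpace ℂ (Fin N))) from by rw [mulVecLin_apply]; simp]
      rw [map_sum, WithLp.ofLp_sum]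
      refine Finset.sum_congr rfl fun k _ => ?_
      rw [WithLp.ofLp_smul, _root_.map_smul, mulVecLin_apply, hweig k, smul_smul]
    have h1 : (star ((∑ k, c k • w k : EuclideanSpace ℂ (Fin N)) : Fin N → ℂ)
        ⬝ᵥ H.mulVec (∑ k, c k • w k : EuclideanSpace ℂ (Fin N)))
        = inner (𝕜 := ℂ) (∑ k, c k • w k : EuclideanSpace ℂ (Fin N))
            (∑ k, (c k * (μ k : ℂ)) • w k : EuclideanSpace ℂ (Fin N)) := by
      rw [EuclideanSpace.inner_eq_star_dotProduct, hmv]; exact dotProduct_comm _ _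
    rw [h1, hw.inner_sum, Complex.re_sum]
    refine Finset.sum_congr rfl fun k _ => ?_
    have : (starRingEnd ℂ) (c k) * (c k * (μ k : ℂ))
        = ((Complex.normSq (c k) : ℝ) : ℂ) * ((μ k : ℝ) : ℂ) := by
      rw [← mul_assoc, Complex.normSq_eq_conj_mul_self]
    rw [this, ← Complex.ofReal_mul, Complex.ofReal_re, mul_comm]
  · have h2 : ‖(∑ k, c k • w k : EuclideanSpace ℂ (Fin N))‖ ^ 2
        = (inner (𝕜 := ℂ) (∑ k, c k • w k : EuclideanSpace ℂ (Fin N))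
            (∑ k, c k • w k : EuclideanSpace ℂ (Fin N))).re := by
      rw [← inner_self_eq_norm_sq (𝕜 := ℂ)]; rfl
    rw [h2, hw.inner_sum, Complex.re_sum]
    refine Finset.sum_congr rfl fun k _ => ?_
    simp [← Complex.normSq_eq_conj_mul_self]

lemma form_span_ge {N : ℕ} {H : Matrix (Fin N) (Fin N) ℂ} {ι : Type*} [Fintype ι]
    {w : ι → EuclideanSpace ℂ (Fin N)} (hw : Orthonormal ℂ w)
    {μ : ι → ℝ} (hweig : ∀ k, H.mulVec (w k) = (μ k : ℂ) • (w k))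
    {c : ℝ} (hc : ∀ k, c ≤ μ k)
    {x : EuclideanSpace ℂ (Fin N)} (hx : x ∈ Submodule.span ℂ (Set.range w)) :
    c * ‖x‖ ^ 2 ≤ (star (x : Fin N → ℂ) ⬝ᵥ H.mulVec x).re := by
  obtain ⟨r, hr0, hform, hnorm⟩ := form_span hw hweig hx
  rw [hform, hnorm, Finset.mul_sum]
  exact Finset.sum_le_sum fun k _ => mul_le_mul_of_nonneg_right (hc k) (hr0 k)

lemma form_span_le {N : ℕ} {H : Matrix (Fin N) (Fin N) ℂ} {ι : Type*} [Fintype ι]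
    {w : ι → EuclideanSpace ℂ (Fin N)} (hw : Orthonormal ℂ w)
    {μ : ι → ℝ} (hweig : ∀ k, H.mulVec (w k) = (μ k : ℂ) • (w k))
    {c : ℝ} (hc : ∀ k, μ k ≤ c)
    {x : EuclideanSpace ℂ (Fin N)} (hx : x ∈ Submodule.span ℂ (Set.range w)) :
    (star (x : Fin N → ℂ) ⬝ᵥ H.mulVec x).re ≤ c * ‖x‖ ^ 2 := by
  obtain ⟨r, hr0, hform, hnorm⟩ := form_span hw hweig hx
  rw [hform, hnorm, Finset.mul_sum]
  exact Finset.sum_le_sum fun k _ => mul_le_mul_of_nonneg_right (hc k) (hr0 k)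

lemma exists_ne_zero_mem_inf {V : Type*} [NormedAddCommGroup V] [InnerProductSpace ℂ V]
    [FiniteDimensional ℂ V] (S T : Submodule ℂ V)
    (h : finrank ℂ V < finrank ℂ S + finrank ℂ T) :
    ∃ x : V, x ∈ S ∧ x ∈ T ∧ x ≠ 0 := by
  have h1 : 0 < finrank ℂ (S ⊓ T : Submodule ℂ V) := by
    have h3 := Submodule.finrank_sup_add_finrank_inf_eq S T
    have h2 : finrank ℂ (S ⊔ T : Submodule ℂ V) ≤ finrank ℂ V := Submodule.finrank_le _
    omega
  obtain ⟨⟨x, hx⟩, hne⟩ := Module.finrank_pos_iff_exists_ne_zero.mp h1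
  exact ⟨x, hx.1, hx.2, fun h0 => hne (Subtype.ext h0)⟩

lemma real_cast_smul_eq {N : ℕ} (r : ℝ) (v : EuclideanSpace ℂ (Fin N)) :
    (r : ℂ) • v = r • v := by
  ext i
  simp [Complex.real_smul]

/-! ### Courant–Fischer style bounds -/

lemma CF_low {N : ℕ} {H : Matrix (Fin N) (Fin N) ℂ} (hH : H.IsHermitian) (i : Fin N) (c : ℝ)
    (S : Submodule ℂ (EuclideanSpace ℂ (Fin N)))
    (hdim : N ≤ finrank ℂ S + (i : ℕ))
    (hS : ∀ x ∈ S, c * ‖x‖ ^ 2 ≤ (star (x : Fin N → ℂ) ⬝ᵥ H.mulVec x).re) :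
    c ≤ (hH.eigenvalues ∘ Tuple.sort hH.eigenvalues) i := by
  classical
  set σ := Tuple.sort hH.eigenvalues with hσ
  set w : {k : Fin N // k ≤ i} → EuclideanSpace ℂ (Fin N) :=
    fun k => hH.eigenvectorBasis (σ k.1) with hwdef
  have hw : Orthonormal ℂ w :=
    hH.eigenvectorBasis.orthonormal.comp _ (σ.injective.comp Subtype.val_injective)
  have hweig : ∀ k, H.mulVec (w k) = (((hH.eigenvalues ∘ σ) k.1 : ℝ) : ℂ) • w k := fun k => by
    rw [Complex.coe_smul]
    exact hH.mulVec_eigenvectorBasis (σ k.1)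
  set T := Submodule.span ℂ (Set.range w) with hT
  have hcard : Fintype.card {k : Fin N // k ≤ i} = (i : ℕ) + 1 := by
    rw [Fintype.card_subtype]
    have : Finset.filter (fun k => k ≤ i) Finset.univ = Finset.Iic i := by ext k; simp
    rw [this, Fin.card_Iic]
  have hTrank : finrank ℂ T = (i : ℕ) + 1 := by
    rw [hT, finrank_span_eq_card hw.linearIndependent, hcard]
  obtain ⟨x, hxS, hxT, hx0⟩ := exists_ne_zero_mem_inf S T (by
    rw [finrank_euclideanSpace_fin, hTrank]; omega)
  have h1 := hS x hxS
  have h2 := form_span_le hw hweig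
    (c := (hH.eigenvalues ∘ σ) i)
    (fun k => Tuple.monotone_sort hH.eigenvalues k.2) hxT
  have hn : 0 < ‖x‖ ^ 2 := by
    have := norm_pos_iff.mpr hx0
    positivity
  exact le_of_mul_le_mul_right (h1.trans h2) hn

lemma CF_high {N : ℕ} {H : Matrix (Fin N) (Fin N) ℂ} (hH : H.IsHermitian) (i : Fin N) (c : ℝ)
    (S : Submodule ℂ (EuclideanSpace ℂ (Fin N)))
    (hdim : (i : ℕ) + 1 ≤ finrank ℂ S)
    (hS : ∀ x ∈ S, (star (x : Fin N → ℂ) ⬝ᵥ H.mulVec x).re ≤ c * ‖x‖ ^ 2) :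
    (hH.eigenvalues ∘ Tuple.sort hH.eigenvalues) i ≤ c := by
  classical
  set σ := Tuple.sort hH.eigenvalues with hσ
  set w : {k : Fin N // i ≤ k} → EuclideanSpace ℂ (Fin N) :=
    fun k => hH.eigenvectorBasis (σ k.1) with hwdef
  have hw : Orthonormal ℂ w :=
    hH.eigenvectorBasis.orthonormal.comp _ (σ.injective.comp Subtype.val_injective)
  have hweig : ∀ k, H.mulVec (w k) = (((hH.eigenvalues ∘ σ) k.1 : ℝ) : ℂ) • w k := fun k => by
    rw [Complex.coe_smul]
    exact hH.mulVec_eigenvectorBasis (σ k.1)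
  set T := Submodule.span ℂ (Set.range w) with hT
  have hcard : Fintype.card {k : Fin N // i ≤ k} = N - (i : ℕ) := by
    rw [Fintype.card_subtype]
    have : Finset.filter (fun k => i ≤ k) Finset.univ = Finset.Ici i := by ext k; simp
    rw [this, Fin.card_Ici]
  have hTrank : finrank ℂ T = N - (i : ℕ) := by
    rw [hT, finrank_span_eq_card hw.linearIndependent, hcard]
  obtain ⟨x, hxS, hxT, hx0⟩ := exists_ne_zero_mem_inf S T (by
    rw [finrank_euclideanSpace_fin, hTrank]
    have := i.isLt
    omega)
  have h1 := hS x hxS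
  have h2 := form_span_ge hw hweig
    (c := (hH.eigenvalues ∘ σ) i)
    (fun k => Tuple.monotone_sort hH.eigenvalues k.2) hxT
  have hn : 0 < ‖x‖ ^ 2 := by
    have := norm_pos_iff.mpr hx0
    positivity
  exact le_of_mul_le_mul_right (h2.trans h1) hn

/-! ### Matrix form helpers -/

lemma mre_isHermitian {m : Type*} [Fintype m] (T : Matrix m m ℂ) : (mre T).IsHermitian := by
  unfold mre Matrix.IsHermitian
  rw [conjTranspose_smul, conjTranspose_add, conjTranspose_conjTranspose, add_comm]
  congr 1
  simp

lemma mre_fromBlocks {n : ℕ} (A B X : Matrix (Fin n) (Fin n) ℂ) :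
    mre (Matrix.fromBlocks A X Xᴴ B) = Matrix.fromBlocks (mre A) X Xᴴ (mre B) := by
  unfold mre
  rw [fromBlocks_conjTranspose, conjTranspose_conjTranspose, fromBlocks_add]
  ext (i | i) (k | k) <;>
    simp [Matrix.smul_apply, Matrix.add_apply] <;> ring

lemma re_mre_form {N : ℕ} (T : Matrix (Fin N) (Fin N) ℂ) (x : Fin N → ℂ) :
    (star x ⬝ᵥ (mre T).mulVec x).re = (star x ⬝ᵥ T.mulVec x).re := by
  have hstar : star x ⬝ᵥ Tᴴ.mulVec x = star (star x ⬝ᵥ T.mulVec x) := by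
    rw [star_dotProduct, star_mulVec, conjTranspose_conjTranspose, ← dotProduct_mulVec]
  unfold mre
  rw [Matrix.smul_mulVec, Matrix.add_mulVec, dotProduct_smul, dotProduct_add, hstar]
  have : ∀ z : ℂ, ((1/2 : ℂ) • (z + star z)).re = z.re := by
    intro z
    simp [Complex.ext_iff]
    ring
  exact this _

lemma norm_mulVec_sq {N : ℕ} (T : Matrix (Fin N) (Fin N) ℂ) (x : Fin N → ℂ) :
    (star x ⬝ᵥ ((Tᴴ * T).mulVec x)).re = ‖eu (T.mulVec x)‖ ^ 2 := by
  have h1 : star x ⬝ᵥ ((Tᴴ * T).mulVec x)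
      = inner (𝕜 := ℂ) (eu (T.mulVec x)) (eu (T.mulVec x)) := by
    rw [← Matrix.mulVec_mulVec, Matrix.dotProduct_mulVec, ← star_mulVec]
    rw [EuclideanSpace.inner_eq_star_dotProduct]; exact dotProduct_comm _ _
  rw [h1]
  have := inner_self_eq_norm_sq (𝕜 := ℂ) (x := eu (T.mulVec x))
  simpa using this

lemma re_form_le_norm {N : ℕ} (T : Matrix (Fin N) (Fin N) ℂ) (x : Fin N → ℂ) :
    (star x ⬝ᵥ T.mulVec x).re ≤ ‖eu x‖ * ‖eu (T.mulVec x)‖ := by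
  have h1 : star x ⬝ᵥ T.mulVec x = inner (𝕜 := ℂ) (eu x) (eu (T.mulVec x)) := by
    rw [EuclideanSpace.inner_eq_star_dotProduct]; exact dotProduct_comm _ _
  rw [h1]
  calc (inner (𝕜 := ℂ) (eu x) (eu (T.mulVec x)) : ℂ).re
      ≤ ‖(inner (𝕜 := ℂ) (eu x) (eu (T.mulVec x)) : ℂ)‖ := Complex.re_le_norm _
    _ ≤ ‖eu x‖ * ‖eu (T.mulVec x)‖ := norm_inner_le_norm _ _

lemma dot_comp_equiv {n : ℕ} (a b : Fin n ⊕ Fin n → ℂ) :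
    star (a ∘ ⇑finSumFinEquiv.symm) ⬝ᵥ (b ∘ ⇑(finSumFinEquiv (m := n) (n := n)).symm)
      = star a ⬝ᵥ b := by
  simp only [dotProduct, Pi.star_apply, Function.comp_apply]
  exact Equiv.sum_comp finSumFinEquiv.symm (fun p => star (a p) * b p)

lemma dot_sum_elim {n : ℕ} (a₁ a₂ b₁ b₂ : Fin n → ℂ) :
    star (Sum.elim a₁ a₂) ⬝ᵥ (Sum.elim b₁ b₂) = star a₁ ⬝ᵥ b₁ + star a₂ ⬝ᵥ b₂ := by
  simp [dotProduct, Fintype.sum_sum_type]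

lemma reindex_mulVec {n : ℕ} (F : Matrix (Fin n ⊕ Fin n) (Fin n ⊕ Fin n) ℂ)
    (y : Fin n ⊕ Fin n → ℂ) :
    (Matrix.reindex finSumFinEquiv finSumFinEquiv F).mulVec (y ∘ ⇑finSumFinEquiv.symm)
      = (F.mulVec y) ∘ ⇑finSumFinEquiv.symm := by
  rw [Matrix.reindex_apply, Matrix.submatrix_mulVec_equiv]
  funext q
  simp [Function.comp_def]

end Stmt6Aux

open Module Submodule Stmt6Aux

/-- If the block matrix `M = [[A, X], [Xᴴ, B]]` is accretive, then
`2 sⱼ(X) ≤ sⱼ(M)` for `j = 1, …, n`. -/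
theorem stmt6 {n : ℕ} (A B X : Matrix (Fin n) (Fin n) ℂ)
    (hM : Accretive (Matrix.fromBlocks A X Xᴴ B)) (j : Fin n) :
    2 * singVals X j ≤
      singVals (Matrix.reindex finSumFinEquiv finSumFinEquiv (Matrix.fromBlocks A X Xᴴ B))
        (Fin.castAdd n j) := by
  classical
  unfold singVals
  set R := Matrix.reindex finSumFinEquiv finSumFinEquiv (Matrix.fromBlocks A X Xᴴ B) with hRdef
  set hXX := (Matrix.posSemidef_conjTranspose_mul_self X).1 with hXXdef
  set hRR := (Matrix.posSemidef_conjTranspose_mul_self R).1 with hRRdef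
  set ν : Fin n → ℝ := hXX.eigenvalues ∘ Tuple.sort hXX.eigenvalues with hνdef
  set νR : Fin (n + n) → ℝ := hRR.eigenvalues ∘ Tuple.sort hRR.eigenvalues with hνRdef
  set iP : Fin (n + n) := (Fin.castAdd n j).rev with hiPdef
  have hνR0 : 0 ≤ νR iP :=
    (Matrix.posSemidef_conjTranspose_mul_self R).eigenvalues_nonneg
      (Tuple.sort hRR.eigenvalues iP)
  rcases le_or_gt (ν j.rev) 0 with hle | hpos
  · rw [Real.sqrt_eq_zero_of_nonpos hle]
    simpa using Real.sqrt_nonneg (νR iP)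
  have hP : (mre R).IsHermitian := mre_isHermitian R
  -- Step B : Fan–Hoffman type bound
  have hBstep : (hP.eigenvalues ∘ Tuple.sort hP.eigenvalues) iP ≤ Real.sqrt (νR iP) := by
    set σR := Tuple.sort hRR.eigenvalues with hσR
    set wR : {k : Fin (n + n) // k ≤ iP} → EuclideanSpace ℂ (Fin (n + n)) :=
      fun k => hRR.eigenvectorBasis (σR k.1) with hwRdef
    have hwR : Orthonormal ℂ wR :=
      hRR.eigenvectorBasis.orthonormal.comp _ (σR.injective.comp Subtype.val_injective)
    have hweigR : ∀ k, (Rᴴ * R).mulVec (wR k) = ((νR k.1 : ℝ) : ℂ) • wR k := fun k => by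
      rw [Complex.coe_smul]
      exact hRR.mulVec_eigenvectorBasis (σR k.1)
    apply CF_high hP iP (Real.sqrt (νR iP)) (Submodule.span ℂ (Set.range wR))
    · rw [finrank_span_eq_card hwR.linearIndependent]
      have hcard : Fintype.card {k : Fin (n + n) // k ≤ iP} = (iP : ℕ) + 1 := by
        rw [Fintype.card_subtype]
        have : Finset.filter (fun k => k ≤ iP) Finset.univ = Finset.Iic iP := by ext k; simp
        rw [this, Fin.card_Iic]
      omega
    · intro x hx
      have hXb : ‖eu (R.mulVec x)‖ ^ 2 ≤ νR iP * ‖x‖ ^ 2 := by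
        have hfs := form_span_le hwR hweigR
          (c := νR iP) (fun k => Tuple.monotone_sort hRR.eigenvalues k.2) hx
        rw [norm_mulVec_sq] at hfs
        exact hfs
      have h4 : ‖eu (R.mulVec x)‖ ≤ Real.sqrt (νR iP) * ‖x‖ := by
        calc ‖eu (R.mulVec x)‖ = Real.sqrt (‖eu (R.mulVec x)‖ ^ 2) :=
              (Real.sqrt_sq (norm_nonneg _)).symm
          _ ≤ Real.sqrt (νR iP * ‖x‖ ^ 2) := Real.sqrt_le_sqrt hXb
          _ = Real.sqrt (νR iP) * ‖x‖ := by
              rw [Real.sqrt_mul hνR0, Real.sqrt_sq (norm_nonneg _)]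
      calc (star (x : Fin (n + n) → ℂ) ⬝ᵥ (mre R).mulVec x).re
          = (star (x : Fin (n + n) → ℂ) ⬝ᵥ R.mulVec x).re := re_mre_form R x
        _ ≤ ‖eu (x : Fin (n + n) → ℂ)‖ * ‖eu (R.mulVec x)‖ := re_form_le_norm R x
        _ ≤ ‖x‖ * (Real.sqrt (νR iP) * ‖x‖) := by
            rw [eu_coe]
            exact mul_le_mul_of_nonneg_left h4 (norm_nonneg _)
        _ = Real.sqrt (νR iP) * ‖x‖ ^ 2 := by ring
  -- Step C : Tao type bound
  have hCstep : 2 * Real.sqrt (ν j.rev) ≤ (hP.eigenvalues ∘ Tuple.sort hP.eigenvalues) iP := by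
    set σX := Tuple.sort hXX.eigenvalues with hσX
    set v : Fin n → EuclideanSpace ℂ (Fin n) := fun k => hXX.eigenvectorBasis (σX k) with hvdef
    have hv : Orthonormal ℂ v := hXX.eigenvectorBasis.orthonormal.comp _ σX.injective
    have hveig : ∀ k, (Xᴴ * X).mulVec (v k) = ((ν k : ℝ) : ℂ) • v k := fun k => by
      rw [Complex.coe_smul]
      exact hXX.mulVec_eigenvectorBasis (σX k)
    set s : Fin n → ℝ := fun k => Real.sqrt (ν k) with hsdef
    have hν0 : ∀ k : Fin n, 0 ≤ ν k := fun k =>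
      (Matrix.posSemidef_conjTranspose_mul_self X).eigenvalues_nonneg (σX k)
    have hspos : ∀ k : {k : Fin n // j.rev ≤ k}, 0 < s k.1 := fun k =>
      Real.sqrt_pos.mpr (lt_of_lt_of_le hpos (Tuple.monotone_sort hXX.eigenvalues k.2))
    have hs_sq : ∀ k : Fin n, s k ^ 2 = ν k := fun k => Real.sq_sqrt (hν0 k)
    have hXvXv : ∀ k l : Fin n, star (X.mulVec (v k)) ⬝ᵥ X.mulVec (v l)
        = (if k = l then ((ν l : ℝ) : ℂ) else 0) := by
      intro k l
      rw [star_mulVec, ← dotProduct_mulVec, Matrix.mulVec_mulVec, hveig l, dotProduct_smul]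
      have hvv : star (v k : Fin n → ℂ) ⬝ᵥ (v l : Fin n → ℂ)
          = (if k = l then (1 : ℂ) else 0) := by
        have h := orthonormal_iff_ite.mp hv k l
        rw [EuclideanSpace.inner_eq_star_dotProduct, dotProduct_comm] at h
        exact h
      rw [hvv]
      by_cases hkl : k = l <;> simp [hkl]
    set u : {k : Fin n // j.rev ≤ k} → Fin n → ℂ :=
      fun k => (((s k.1)⁻¹ : ℝ) : ℂ) • X.mulVec (v k.1) with hudef
    have hXv : ∀ k : {k : Fin n // j.rev ≤ k},
        X.mulVec (v k.1) = ((s k.1 : ℝ) : ℂ) • u k := by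
      intro k
      rw [hudef, smul_smul, ← Complex.ofReal_mul,
        mul_inv_cancel₀ (ne_of_gt (hspos k)), Complex.ofReal_one, one_smul]
    have hXHu : ∀ k : {k : Fin n // j.rev ≤ k},
        Xᴴ.mulVec (u k) = ((s k.1 : ℝ) : ℂ) • (v k.1 : Fin n → ℂ) := by
      intro k
      rw [hudef, Matrix.mulVec_smul, Matrix.mulVec_mulVec, hveig k.1, smul_smul,
        ← Complex.ofReal_mul]
      congr 2
      rw [← hs_sq k.1, pow_two, inv_mul_cancel_left₀ (ne_of_gt (hspos k))]
    have huu : ∀ k l, star (u k) ⬝ᵥ u l = (if k = l then (1 : ℂ) else 0) := by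
      intro k l
      rw [hudef, star_smul, smul_dotProduct, dotProduct_smul, hXvXv]
      by_cases hkl : k = l
      · subst hkl
        rw [if_pos rfl, if_pos rfl]
        have hstar : (star ((((s k.1)⁻¹ : ℝ)) : ℂ)) = ((((s k.1)⁻¹ : ℝ)) : ℂ) := by
          simp [Complex.star_def, Complex.conj_ofReal]
        rw [hstar, smul_eq_mul, smul_eq_mul, ← Complex.ofReal_mul, ← Complex.ofReal_mul]
        norm_cast
        have hne : s k.1 ≠ 0 := ne_of_gt (hspos k)
        rw [← hs_sq k.1, pow_two]
        field_simp
      · have hkl' : k.1 ≠ l.1 := fun h => hkl (Subtype.ext h)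
        simp [hkl', hkl]
    set y : {k : Fin n // j.rev ≤ k} → (Fin n ⊕ Fin n → ℂ) :=
      fun k => Sum.elim (u k) (v k.1) with hydef
    set w : {k : Fin n // j.rev ≤ k} → EuclideanSpace ℂ (Fin (n + n)) :=
      fun k => eu ((((Real.sqrt 2)⁻¹ : ℝ) : ℂ) • (y k ∘ ⇑finSumFinEquiv.symm)) with hwdef
    have hvv' : ∀ k l : {k : Fin n // j.rev ≤ k},
        star (v k.1 : Fin n → ℂ) ⬝ᵥ (v l.1 : Fin n → ℂ)
          = (if k = l then (1 : ℂ) else 0) := by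
      intro k l
      have h : star (v k.1 : Fin n → ℂ) ⬝ᵥ (v l.1 : Fin n → ℂ)
          = (if k.1 = l.1 then (1 : ℂ) else 0) := by
        have h0 := orthonormal_iff_ite.mp hv k.1 l.1
        rw [EuclideanSpace.inner_eq_star_dotProduct, dotProduct_comm] at h0
        exact h0
      rw [h]
      by_cases hkl : k = l
      · simp [hkl]
      · have hkl' : k.1 ≠ l.1 := fun hh => hkl (Subtype.ext hh)
        simp [hkl', hkl]
    have hyy : ∀ k l, star (y k) ⬝ᵥ y l = (if k = l then (2 : ℂ) else 0) := by
      intro k l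
      rw [hydef]
      rw [show (star (Sum.elim (u k) (v k.1)) ⬝ᵥ Sum.elim (u l) (v l.1))
          = star (u k) ⬝ᵥ u l + star (v k.1 : Fin n → ℂ) ⬝ᵥ (v l.1 : Fin n → ℂ) from
        dot_sum_elim _ _ _ _]
      rw [huu, hvv']
      by_cases hkl : k = l <;> simp [hkl] <;> norm_num
    have hsqrt2 : ((Real.sqrt 2)⁻¹ : ℝ) * ((Real.sqrt 2)⁻¹ * 2) = 1 := by
      have h2 : Real.sqrt 2 * Real.sqrt 2 = 2 := Real.mul_self_sqrt (by norm_num)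
      have hne : Real.sqrt 2 ≠ 0 := by positivity
      field_simp
      rw [Real.sq_sqrt (by norm_num)]
    have hw : Orthonormal ℂ w := by
      rw [orthonormal_iff_ite]
      intro k l
      have hinner : (inner ℂ (w k) (w l) : ℂ)
          = star (w k : Fin (n + n) → ℂ) ⬝ᵥ (w l : Fin (n + n) → ℂ) :=
        (EuclideanSpace.inner_eq_star_dotProduct _ _).trans (dotProduct_comm _ _)
      rw [hinner, hwdef]
      simp only [eu]
      rw [show ((WithLp.equiv 2 (Fin (n+n) → ℂ)).symm
          ((((Real.sqrt 2)⁻¹ : ℝ) : ℂ) • (y k ∘ ⇑finSumFinEquiv.symm)) : Fin (n+n) → ℂ)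
          = (((Real.sqrt 2)⁻¹ : ℝ) : ℂ) • (y k ∘ ⇑finSumFinEquiv.symm) from rfl]
      rw [show ((WithLp.equiv 2 (Fin (n+n) → ℂ)).symm
          ((((Real.sqrt 2)⁻¹ : ℝ) : ℂ) • (y l ∘ ⇑finSumFinEquiv.symm)) : Fin (n+n) → ℂ)
          = (((Real.sqrt 2)⁻¹ : ℝ) : ℂ) • (y l ∘ ⇑finSumFinEquiv.symm) from rfl]
      rw [star_smul, smul_dotProduct, dotProduct_smul, dot_comp_equiv, hyy]
      by_cases hkl : k = l
      · rw [if_pos hkl, if_pos hkl]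
        have hstar : (star ((((Real.sqrt 2)⁻¹ : ℝ)) : ℂ)) = ((((Real.sqrt 2)⁻¹ : ℝ)) : ℂ) := by
          simp [Complex.star_def, Complex.conj_ofReal]
        rw [hstar, smul_eq_mul, smul_eq_mul]
        exact_mod_cast congrArg (fun t : ℝ => (t : ℂ)) hsqrt2
      · rw [if_neg hkl, if_neg hkl]
        simp
    set K := Matrix.reindex finSumFinEquiv finSumFinEquiv
      (Matrix.fromBlocks 0 X Xᴴ 0) with hKdef
    have hFy : ∀ k, (Matrix.fromBlocks 0 X Xᴴ 0).mulVec (y k)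
        = ((s k.1 : ℝ) : ℂ) • y k := by
      intro k
      simp only [hydef, Matrix.fromBlocks_mulVec, Sum.elim_comp_inl, Sum.elim_comp_inr,
        Matrix.zero_mulVec, zero_add, add_zero]
      rw [hXv k, hXHu k]
      funext p
      cases p <;> simp
    have hKeig : ∀ k, ((2 : ℂ) • K).mulVec (w k) = ((2 * s k.1 : ℝ) : ℂ) • w k := by
      intro k
      rw [hwdef]
      simp only [eu]
      rw [show ((WithLp.equiv 2 (Fin (n+n) → ℂ)).symm
          ((((Real.sqrt 2)⁻¹ : ℝ) : ℂ) • (y k ∘ ⇑finSumFinEquiv.symm)) : Fin (n+n) → ℂ)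
          = (((Real.sqrt 2)⁻¹ : ℝ) : ℂ) • (y k ∘ ⇑finSumFinEquiv.symm) from rfl]
      rw [Matrix.smul_mulVec, Matrix.mulVec_smul, hKdef, reindex_mulVec, hFy k]
      funext i
      simp only [Pi.smul_apply, PiLp.smul_apply, Function.comp_apply, smul_eq_mul,
        WithLp.equiv_symm_apply, WithLp.ofLp_toLp]
      push_cast
      ring
    -- positivity of P - 2K
    have hpsd : ((mre R) - (2 : ℂ) • K).PosSemidef := by
      unfold Accretive at hM
      set D : Matrix (Fin n ⊕ Fin n) (Fin n ⊕ Fin n) ℂ := Matrix.fromBlocks 1 0 0 (-1) with hD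
      have hDH : Dᴴ = D := by rw [hD, fromBlocks_conjTranspose]; simp
      have hcon : Dᴴ * (Matrix.fromBlocks (mre A) X Xᴴ (mre B)) * D
          = Matrix.fromBlocks (mre A) (-X) (-Xᴴ) (mre B) := by
        rw [hDH, hD, fromBlocks_multiply, fromBlocks_multiply]
        simp
      have hPK : (mre R) - (2 : ℂ) • K
          = Matrix.reindex finSumFinEquiv finSumFinEquiv
              (Matrix.fromBlocks (mre A) (-X) (-Xᴴ) (mre B)) := by
        have h1 : mre R = Matrix.reindex finSumFinEquiv finSumFinEquiv
            (Matrix.fromBlocks (mre A) X Xᴴ (mre B)) := by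
          rw [hRdef, ← mre_fromBlocks]
          ext i k
          simp [mre, Matrix.reindex_apply, Matrix.submatrix_apply,
            Matrix.conjTranspose_apply, mul_add]
        rw [h1, hKdef]
        ext i k
        rcases hp : finSumFinEquiv.symm i with p | p <;>
          rcases hq : finSumFinEquiv.symm k with q | q <;>
          simp [Matrix.reindex_apply, Matrix.submatrix_apply, Matrix.sub_apply,
            Matrix.smul_apply, hp, hq] <;> ring
      rw [hPK]
      have h2 := hM.conjTranspose_mul_mul_same D
      rw [mre_fromBlocks, hcon] at h2
      have h3 := h2.submatrix ⇑finSumFinEquiv.symm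
      simpa [Matrix.reindex_apply] using h3
    apply CF_low hP iP (2 * Real.sqrt (ν j.rev)) (Submodule.span ℂ (Set.range w))
    · rw [finrank_span_eq_card hw.linearIndependent]
      have hcard : Fintype.card {k : Fin n // j.rev ≤ k} = n - (j.rev : ℕ) := by
        rw [Fintype.card_subtype]
        have : Finset.filter (fun k => j.rev ≤ k) Finset.univ = Finset.Ici j.rev := by
          ext k; simp
        rw [this, Fin.card_Ici]
      rw [hcard]
      have h1 := Fin.val_rev j
      have h2 : (iP : ℕ) = (n + n) - ((j : ℕ) + 1) := by
        rw [hiPdef, Fin.val_rev]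
        simp
      have := j.isLt
      omega
    · intro x hx
      have hsplit : (mre R).mulVec x
          = ((mre R) - (2 : ℂ) • K).mulVec x + ((2 : ℂ) • K).mulVec x := by
        rw [← Matrix.add_mulVec, sub_add_cancel]
      rw [hsplit, dotProduct_add, Complex.add_re]
      have hterm1 : 0 ≤ (star (x : Fin (n + n) → ℂ) ⬝ᵥ ((mre R) - (2 : ℂ) • K).mulVec x).re := by
        have := hpsd.re_dotProduct_nonneg (x : Fin (n + n) → ℂ)
        simpa using this
      have hterm2 : (2 * Real.sqrt (ν j.rev)) * ‖x‖ ^ 2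
          ≤ (star (x : Fin (n + n) → ℂ) ⬝ᵥ ((2 : ℂ) • K).mulVec x).re := by
        apply form_span_ge hw hKeig ?_ hx
        intro k
        have hmono : Real.sqrt (ν j.rev) ≤ s k.1 :=
          Real.sqrt_le_sqrt (Tuple.monotone_sort hXX.eigenvalues k.2)
        linarith
      linarith
  exact le_trans hCstep hBstep
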